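/- Let f : X × Y → {0,1} on finite sets X, Y, let μ be a product distribution on X × Y, and let ε, δ ∈ (0,1) and D > 0. If srec^{0,μ}_{ε,δ}(f) ≤ D, then for every ρ ∈ (0,1) there exists a combinatorial rectangle S ⊆ X × Y such that μ_1(S) ≤ ρ·μ_0(S) and μ(S) ≥ μ_0(S) ≥ (1/D)·((1−ε)·μ_0 − (δ/ρ)·μ_1). -/

import Mathlib

open scoped BigOperators
open scoped Classical

noncomputable section

/-! ## Probability distributions on finite types -/

/-- `p` is a probability distribution on the finite type `α`. -/
def IsDist {α : Type} [Fintype α] (p : α → ℝ) : Prop :=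
  (∀ a, 0 ≤ p a) ∧ ∑ a, p a = 1

/-- `μ` (in curried form) is a probability distribution on `X × Y`. -/
def IsDist2 {X Y : Type} [Fintype X] [Fintype Y] (μ : X → Y → ℝ) : Prop :=
  (∀ x y, 0 ≤ μ x y) ∧ ∑ x, ∑ y, μ x y = 1

/-! ## Deterministic communication protocols -/

/-- A deterministic two-party communication protocol: a finite binary tree where each
internal node is owned by Alice (`nodeA`) or Bob (`nodeB`) and is labeled by a function
of that player's input choosing one of the two children; leaves carry Boolean outputs. -/
inductive Protocol (X Y : Type) : Type
  | leaf : Bool → Protocol X Y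
  | nodeA : (X → Bool) → Protocol X Y → Protocol X Y → Protocol X Y
  | nodeB : (Y → Bool) → Protocol X Y → Protocol X Y → Protocol X Y

namespace Protocol

def eval {X Y : Type} : Protocol X Y → X → Y → Bool
  | leaf b, _, _ => b
  | nodeA g t0 t1, x, y => if g x then eval t1 x y else eval t0 x y
  | nodeB g t0 t1, x, y => if g y then eval t1 x y else eval t0 x y

/-- Depth (number of bits communicated in the worst case). -/
def depth {X Y : Type} : Protocol X Y → ℕ
  | leaf _ => 0
  | nodeA _ t0 t1 => max (depth t0) (depth t1) + 1
  | nodeB _ t0 t1 => max (depth t0) (depth t1) + 1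

/-- Number of leaves. -/
def leavesCount {X Y : Type} : Protocol X Y → ℕ
  | leaf _ => 1
  | nodeA _ t0 t1 => leavesCount t0 + leavesCount t1
  | nodeB _ t0 t1 => leavesCount t0 + leavesCount t1

/-- The sequence of bits communicated on input `(x, y)`. -/
def transcript {X Y : Type} : Protocol X Y → X → Y → List Bool
  | leaf _, _, _ => []
  | nodeA g t0 t1, x, y =>
      if g x then true :: transcript t1 x y else false :: transcript t0 x y
  | nodeB g t0 t1, x, y =>
      if g y then true :: transcript t1 x y else false :: transcript t0 x y

end Protocol

/-- Error of a deterministic protocol w.r.t. input distribution `μ`. -/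
def commErr {X Y : Type} [Fintype X] [Fintype Y]
    (μ : X → Y → ℝ) (f : X → Y → Bool) (P : Protocol X Y) : ℝ :=
  ∑ x, ∑ y, if P.eval x y ≠ f x y then μ x y else 0

/-- Distributional communication complexity `CC^μ_ε(f)`: the minimum depth of a
deterministic protocol erring with probability at most `ε` under `μ`. -/
def CCdist {X Y : Type} [Fintype X] [Fintype Y]
    (μ : X → Y → ℝ) (f : X → Y → Bool) (ε : ℝ) : ℕ :=
  sInf {d : ℕ | ∃ P : Protocol X Y, P.depth ≤ d ∧ commErr μ f P ≤ ε}

/-- The advantage `adv_μ(Π)` of a protocol w.r.t. a (not necessarily normalized) measure. -/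
def protAdv {X Y : Type} [Fintype X] [Fintype Y]
    (μ : X → Y → ℝ) (f : X → Y → Bool) (P : Protocol X Y) : ℝ :=
  ∑ x, ∑ y, if P.eval x y = f x y then μ x y else - μ x y

/-! ## Information complexity -/

/-- Probability of an event under a finite (possibly unnormalized) distribution. -/
def prOf {Ω : Type} [Fintype Ω] (p : Ω → ℝ) (q : Ω → Prop) : ℝ :=
  ∑ ω, if q ω then p ω else 0

/-- Conditional mutual information `I(A ; B | C)` (in bits) of random variables `A`, `B`, `C`
defined on a finite probability space `(Ω, p)`. -/
def condMI {Ω α β γ : Type} [Fintype Ω] (p : Ω → ℝ)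
    (A : Ω → α) (B : Ω → β) (C : Ω → γ) : ℝ :=
  ∑ ω, p ω * Real.logb 2 (
    (prOf p (fun ω' => A ω' = A ω ∧ B ω' = B ω ∧ C ω' = C ω) *
      prOf p (fun ω' => C ω' = C ω)) /
    (prOf p (fun ω' => A ω' = A ω ∧ C ω' = C ω) *
      prOf p (fun ω' => B ω' = B ω ∧ C ω' = C ω)))

/-- Internal information cost `IC^μ(Π) = I(X;T|Y) + I(Y;T|X)` of the public-coin protocol
given by a distribution `ρ` on `Fin m` together with deterministic protocols `P r`; the
transcript `T` consists of the public randomness together with the communicated bits. -/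
def infoCost {X Y : Type} [Fintype X] [Fintype Y] (μ : X → Y → ℝ)
    {m : ℕ} (ρ : Fin m → ℝ) (P : Fin m → Protocol X Y) : ℝ :=
  condMI (fun ω : X × Y × Fin m => μ ω.1 ω.2.1 * ρ ω.2.2)
      (fun ω => ω.1)
      (fun ω => (ω.2.2, (P ω.2.2).transcript ω.1 ω.2.1))
      (fun ω => ω.2.1)
  + condMI (fun ω : X × Y × Fin m => μ ω.1 ω.2.1 * ρ ω.2.2)
      (fun ω => ω.2.1)
      (fun ω => (ω.2.2, (P ω.2.2).transcript ω.1 ω.2.1))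
      (fun ω => ω.1)

/-- Error of a public-coin protocol under input distribution `μ` and coin distribution `ρ`. -/
def randErr {X Y : Type} [Fintype X] [Fintype Y] (μ : X → Y → ℝ) (f : X → Y → Bool)
    {m : ℕ} (ρ : Fin m → ℝ) (P : Fin m → Protocol X Y) : ℝ :=
  ∑ x, ∑ y, ∑ r, if (P r).eval x y ≠ f x y then μ x y * ρ r else 0

/-- `IC^μ_ε(f)`: infimum of the information cost over all public-coin protocols computing
`f` with error at most `ε` under `μ`. -/
def ICmu {X Y : Type} [Fintype X] [Fintype Y]
    (μ : X → Y → ℝ) (f : X → Y → Bool) (ε : ℝ) : ℝ :=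
  sInf { c : ℝ | ∃ (m : ℕ) (ρ : Fin m → ℝ) (P : Fin m → Protocol X Y),
    IsDist ρ ∧ randErr μ f ρ P ≤ ε ∧ c = infoCost μ ρ P }

/-- `IC_ε(f) = max_μ IC^μ_ε(f)`. -/
def IC {X Y : Type} [Fintype X] [Fintype Y] (f : X → Y → Bool) (ε : ℝ) : ℝ :=
  sSup { c : ℝ | ∃ μ : X → Y → ℝ, IsDist2 μ ∧ c = ICmu μ f ε }

/-! ## Rectangles, smooth rectangle bound and partition bound -/

/-- Total weight of rectangles containing `(x, y)`: a combinatorial rectangle is a pair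
`R = (S, T)` of finite sets, and `(x,y) ∈ R` iff `x ∈ S ∧ y ∈ T`. -/
def rcov {X Y : Type} [Fintype X] [Fintype Y]
    (w : Finset X × Finset Y → ℝ) (x : X) (y : Y) : ℝ :=
  ∑ R : Finset X × Finset Y, if x ∈ R.1 ∧ y ∈ R.2 then w R else 0

/-- `μ(R)` for a rectangle `R`. -/
def rMass {X Y : Type} [Fintype X] [Fintype Y]
    (μ : X → Y → ℝ) (R : Finset X × Finset Y) : ℝ :=
  ∑ x, ∑ y, if x ∈ R.1 ∧ y ∈ R.2 then μ x y else 0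

/-- `μ_z(R) = μ(R ∩ f⁻¹(z))` for a rectangle `R`. -/
def rMassZ {X Y : Type} [Fintype X] [Fintype Y]
    (μ : X → Y → ℝ) (f : X → Y → Bool) (z : Bool) (R : Finset X × Finset Y) : ℝ :=
  ∑ x, ∑ y, if (x ∈ R.1 ∧ y ∈ R.2) ∧ f x y = z then μ x y else 0

/-- `μ_z = μ(f⁻¹(z))`. -/
def totalZ {X Y : Type} [Fintype X] [Fintype Y]
    (μ : X → Y → ℝ) (f : X → Y → Bool) (z : Bool) : ℝ :=
  ∑ x, ∑ y, if f x y = z then μ x y else 0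

/-- `|μ|`, the total mass of a measure. -/
def totalMass {X Y : Type} [Fintype X] [Fintype Y] (μ : X → Y → ℝ) : ℝ :=
  ∑ x, ∑ y, μ x y

/-- Restriction of a measure to a rectangle. -/
def restrictRect {X Y : Type} (μ : X → Y → ℝ) (R : Finset X × Finset Y) : X → Y → ℝ :=
  fun x y => if x ∈ R.1 ∧ y ∈ R.2 then μ x y else 0

/-- Distributional smooth rectangle bound `srec^{z,μ}_{ε,δ}(f)` (LP optimal value). -/
def srecZmu {X Y : Type} [Fintype X] [Fintype Y]
    (μ : X → Y → ℝ) (f : X → Y → Bool) (z : Bool) (ε δ : ℝ) : ℝ :=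
  sInf { v : ℝ | ∃ w : Finset X × Finset Y → ℝ,
    (∀ R, 0 ≤ w R) ∧
    ((1 - ε) * totalZ μ f z ≤ ∑ x, ∑ y, if f x y = z then μ x y * rcov w x y else 0) ∧
    (∀ x y, f x y ≠ z → rcov w x y ≤ δ) ∧
    (∀ x y, rcov w x y ≤ 1) ∧
    v = ∑ R : Finset X × Finset Y, w R }

/-- `srec^μ_{ε,δ}(f) = max{srec^{0,μ}_{ε,δ}(f), srec^{1,μ}_{ε,δ}(f)}`. -/
def srecMu {X Y : Type} [Fintype X] [Fintype Y]
    (μ : X → Y → ℝ) (f : X → Y → Bool) (ε δ : ℝ) : ℝ :=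
  max (srecZmu μ f false ε δ) (srecZmu μ f true ε δ)

/-- Smooth rectangle bound `srec^z_{ε,δ}(f)` (LP optimal value). -/
def srecZ {X Y : Type} [Fintype X] [Fintype Y]
    (f : X → Y → Bool) (z : Bool) (ε δ : ℝ) : ℝ :=
  sInf { v : ℝ | ∃ w : Finset X × Finset Y → ℝ,
    (∀ R, 0 ≤ w R) ∧
    (∀ x y, f x y = z → 1 - ε ≤ rcov w x y) ∧
    (∀ x y, f x y ≠ z → rcov w x y ≤ δ) ∧
    (∀ x y, rcov w x y ≤ 1) ∧
    v = ∑ R : Finset X × Finset Y, w R }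

/-- `srec_{ε,δ}(f) = max{srec^0_{ε,δ}(f), srec^1_{ε,δ}(f)}`. -/
def srec {X Y : Type} [Fintype X] [Fintype Y] (f : X → Y → Bool) (ε δ : ℝ) : ℝ :=
  max (srecZ f false ε δ) (srecZ f true ε δ)

/-- Partition bound `prt_ε(f)` (LP optimal value). -/
def prt {X Y : Type} [Fintype X] [Fintype Y] (f : X → Y → Bool) (ε : ℝ) : ℝ :=
  sInf { v : ℝ | ∃ w : Bool → Finset X × Finset Y → ℝ,
    (∀ z R, 0 ≤ w z R) ∧
    (∀ x y, 1 - ε ≤ rcov (w (f x y)) x y) ∧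
    (∀ x y, rcov (w false) x y + rcov (w true) x y = 1) ∧
    v = ∑ R : Finset X × Finset Y, (w false R + w true R) }

/-! ### General-output versions -/

/-- Smooth rectangle bound `srec^z_{ε,δ}(f)` for general output alphabet. -/
def srecZgen {X Y Z : Type} [Fintype X] [Fintype Y]
    (f : X → Y → Z) (z : Z) (ε δ : ℝ) : ℝ :=
  sInf { v : ℝ | ∃ w : Finset X × Finset Y → ℝ,
    (∀ R, 0 ≤ w R) ∧
    (∀ x y, f x y = z → 1 - ε ≤ rcov w x y) ∧
    (∀ x y, f x y ≠ z → rcov w x y ≤ δ) ∧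
    (∀ x y, rcov w x y ≤ 1) ∧
    v = ∑ R : Finset X × Finset Y, w R }

/-- `srec_{ε,δ}(f) = max_{z ∈ Z} srec^z_{ε,δ}(f)`. -/
def srecGen {X Y Z : Type} [Fintype X] [Fintype Y] [Fintype Z]
    (f : X → Y → Z) (ε δ : ℝ) : ℝ :=
  sSup (Set.range fun z : Z => srecZgen f z ε δ)

/-- Distributional smooth rectangle bound for general output alphabet. -/
def srecZmuGen {X Y Z : Type} [Fintype X] [Fintype Y]
    (μ : X → Y → ℝ) (f : X → Y → Z) (z : Z) (ε δ : ℝ) : ℝ :=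
  sInf { v : ℝ | ∃ w : Finset X × Finset Y → ℝ,
    (∀ R, 0 ≤ w R) ∧
    ((1 - ε) * (∑ x, ∑ y, if f x y = z then μ x y else 0) ≤
      ∑ x, ∑ y, if f x y = z then μ x y * rcov w x y else 0) ∧
    (∀ x y, f x y ≠ z → rcov w x y ≤ δ) ∧
    (∀ x y, rcov w x y ≤ 1) ∧
    v = ∑ R : Finset X × Finset Y, w R }

/-- `srec^μ_{ε,δ}(f) = max_{z ∈ Z} srec^{z,μ}_{ε,δ}(f)`. -/
def srecMuGen {X Y Z : Type} [Fintype X] [Fintype Y] [Fintype Z]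
    (μ : X → Y → ℝ) (f : X → Y → Z) (ε δ : ℝ) : ℝ :=
  sSup (Set.range fun z : Z => srecZmuGen μ f z ε δ)

/-- Partition bound for general output alphabet. -/
def prtGen {X Y Z : Type} [Fintype X] [Fintype Y] [Fintype Z]
    (f : X → Y → Z) (ε : ℝ) : ℝ :=
  sInf { v : ℝ | ∃ w : Z → Finset X × Finset Y → ℝ,
    (∀ z R, 0 ≤ w z R) ∧
    (∀ x y, 1 - ε ≤ rcov (w (f x y)) x y) ∧
    (∀ x y, (∑ z : Z, rcov (w z) x y) = 1) ∧
    v = ∑ z : Z, ∑ R : Finset X × Finset Y, w z R }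

/-! ## Decision trees, subcubes and the query partition bound -/

/-- Deterministic decision trees on `n` input bits. -/
inductive DTree (n : ℕ) : Type
  | leaf : Bool → DTree n
  | node : Fin n → DTree n → DTree n → DTree n

def DTree.eval {n : ℕ} : DTree n → (Fin n → Bool) → Bool
  | .leaf b, _ => b
  | .node i t0 t1, x => if x i then DTree.eval t1 x else DTree.eval t0 x

def DTree.depth {n : ℕ} : DTree n → ℕ
  | .leaf _ => 0
  | .node _ t0 t1 => max (DTree.depth t0) (DTree.depth t1) + 1

/-- Error of a decision tree w.r.t. the input distribution `μ`. -/
def qErr {n : ℕ} (μ : (Fin n → Bool) → ℝ) (g : (Fin n → Bool) → Bool) (T : DTree n) : ℝ :=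
  ∑ x, if T.eval x ≠ g x then μ x else 0

/-- Distributional query complexity `QC^μ_ε(g)`: minimum depth of a deterministic decision
tree erring with probability at most `ε` under `μ`. -/
def QCdist {n : ℕ} (μ : (Fin n → Bool) → ℝ) (g : (Fin n → Bool) → Bool) (ε : ℝ) : ℕ :=
  sInf {d : ℕ | ∃ T : DTree n, T.depth ≤ d ∧ qErr μ g T ≤ ε}

/-- A subcube of `{0,1}ⁿ`, given by its support pattern `s ∈ {0,1,⋆}ⁿ`. -/
abbrev Subcube (n : ℕ) := Fin n → Option Bool

/-- Membership in a subcube. -/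
def memCube {n : ℕ} (A : Subcube n) (x : Fin n → Bool) : Prop :=
  ∀ i, ∀ b, A i = some b → x i = b

/-- Size of (the support of) a subcube. -/
def cubeSize {n : ℕ} (A : Subcube n) : ℕ :=
  (Finset.univ.filter fun i => (A i).isSome).card

/-- Total weight of subcubes containing `x`. -/
def cubeCov {n : ℕ} (w : Subcube n → ℝ) (x : Fin n → Bool) : ℝ :=
  ∑ A : Subcube n, if memCube A x then w A else 0

/-- Query partition bound `qprt_ε(g)` (LP optimal value). -/
def qprt {n : ℕ} (g : (Fin n → Bool) → Bool) (ε : ℝ) : ℝ :=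
  sInf { v : ℝ | ∃ w : Bool → Subcube n → ℝ,
    (∀ z A, 0 ≤ w z A) ∧
    (∀ x, 1 - ε ≤ cubeCov (w (g x)) x) ∧
    (∀ x, cubeCov (w false) x + cubeCov (w true) x = 1) ∧
    v = ∑ A : Subcube n, (w false A + w true A) * 2 ^ cubeSize A }

/-- The bit-wise product distribution on `{0,1}ⁿ` with `p_i(1) = p i`, `p_i(0) = 1 - p i`. -/
def bitProd {n : ℕ} (p : Fin n → ℝ) : (Fin n → Bool) → ℝ :=
  fun x => ∏ i, if x i then p i else 1 - p i

/-- `μ(A)` for a subcube (or any set given by a membership predicate). -/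
def cubeMass {n : ℕ} (μ : (Fin n → Bool) → ℝ) (A : Subcube n) : ℝ :=
  ∑ x, if memCube A x then μ x else 0

/-- `μ_z(A) = μ(A ∩ g⁻¹(z))` for a subcube `A`. -/
def cubeMassZ {n : ℕ} (μ : (Fin n → Bool) → ℝ) (g : (Fin n → Bool) → Bool)
    (z : Bool) (A : Subcube n) : ℝ :=
  ∑ x, if memCube A x ∧ g x = z then μ x else 0

/-- `μ_z = μ(g⁻¹(z))`. -/
def qTotalZ {n : ℕ} (μ : (Fin n → Bool) → ℝ) (g : (Fin n → Bool) → Bool) (z : Bool) : ℝ :=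
  ∑ x, if g x = z then μ x else 0

/-- Mass of a finite set of pairs under the product measure `μA ⊗ μB`. -/
def pairMass {X Y : Type} (μA : X → ℝ) (μB : Y → ℝ) (A : Finset (X × Y)) : ℝ :=
  ∑ q ∈ A, μA q.1 * μB q.2

end

section AuxBiased

variable {X Y : Type} [Fintype X] [Fintype Y]

lemma rMassZ_nonneg' (μ : X → Y → ℝ) (hμ : ∀ x y, 0 ≤ μ x y) (f : X → Y → Bool) (z : Bool)
    (R : Finset X × Finset Y) : 0 ≤ rMassZ μ f z R := by
  apply Finset.sum_nonneg; intro x _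
  apply Finset.sum_nonneg; intro y _
  split
  · exact hμ x y
  · exact le_rfl

lemma totalZ_nonneg' (μ : X → Y → ℝ) (hμ : ∀ x y, 0 ≤ μ x y) (f : X → Y → Bool) (z : Bool) :
    0 ≤ totalZ μ f z := by
  apply Finset.sum_nonneg; intro x _
  apply Finset.sum_nonneg; intro y _
  split
  · exact hμ x y
  · exact le_rfl

lemma rMassZ_le_rMass' (μ : X → Y → ℝ) (hμ : ∀ x y, 0 ≤ μ x y) (f : X → Y → Bool) (z : Bool)
    (R : Finset X × Finset Y) : rMassZ μ f z R ≤ rMass μ R := by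
  apply Finset.sum_le_sum; intro x _
  apply Finset.sum_le_sum; intro y _
  by_cases hm : x ∈ R.1 ∧ y ∈ R.2
  · by_cases hf : f x y = z
    · simp [hm, hf]
    · simp [hm, hf, hμ x y]
  · simp [hm]

lemma rMassZ_empty' (μ : X → Y → ℝ) (f : X → Y → Bool) (z : Bool) :
    rMassZ μ f z ((∅ : Finset X), (∅ : Finset Y)) = 0 := by
  unfold rMassZ; simp

/-- Exchange of summation: weighted sum of rectangle masses equals the covered mass. -/
lemma sum_w_rMassZ (μ : X → Y → ℝ) (f : X → Y → Bool) (z : Bool)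
    (w : Finset X × Finset Y → ℝ) :
    ∑ R : Finset X × Finset Y, w R * rMassZ μ f z R
      = ∑ x, ∑ y, if f x y = z then μ x y * rcov w x y else 0 := by
  have h : ∀ x y, (if f x y = z then μ x y * rcov w x y else 0)
      = ∑ R : Finset X × Finset Y,
          w R * (if (x ∈ R.1 ∧ y ∈ R.2) ∧ f x y = z then μ x y else 0) := by
    intro x y
    by_cases hf : f x y = z
    · simp only [hf, if_true, and_true, rcov, Finset.mul_sum]
      apply Finset.sum_congr rfl
      intro R _
      by_cases hm : x ∈ R.1 ∧ y ∈ R.2 <;> simp [hm, mul_comm]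
    · simp [hf]
  calc ∑ R : Finset X × Finset Y, w R * rMassZ μ f z R
      = ∑ R : Finset X × Finset Y, ∑ x, ∑ y,
          w R * (if (x ∈ R.1 ∧ y ∈ R.2) ∧ f x y = z then μ x y else 0) := by
        apply Finset.sum_congr rfl
        intro R _
        rw [rMassZ, Finset.mul_sum]
        apply Finset.sum_congr rfl
        intro x _
        rw [Finset.mul_sum]
    _ = ∑ x, ∑ y, ∑ R : Finset X × Finset Y,
          w R * (if (x ∈ R.1 ∧ y ∈ R.2) ∧ f x y = z then μ x y else 0) := by
        rw [Finset.sum_comm]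
        apply Finset.sum_congr rfl
        intro x _
        rw [Finset.sum_comm]
    _ = ∑ x, ∑ y, if f x y = z then μ x y * rcov w x y else 0 := by
        apply Finset.sum_congr rfl; intro x _
        apply Finset.sum_congr rfl; intro y _
        exact (h x y).symm

/-- The canonical feasible solution: weight 1 on each singleton rectangle inside `f⁻¹ z`. -/
noncomputable def wSing (f : X → Y → Bool) (z : Bool) : Finset X × Finset Y → ℝ :=
  fun R => if ∃ a b, f a b = z ∧ R = ({a}, {b}) then 1 else 0

lemma rcov_wSing (f : X → Y → Bool) (z : Bool) (x : X) (y : Y) :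
    rcov (wSing f z) x y = if f x y = z then 1 else 0 := by
  unfold rcov wSing
  rw [Finset.sum_eq_single (({x}, {y}) : Finset X × Finset Y)]
  · simp only [Finset.mem_singleton, and_self, if_true]
    by_cases hf : f x y = z
    · rw [if_pos hf, if_pos ⟨x, y, hf, rfl⟩]
    · rw [if_neg hf, if_neg]
      rintro ⟨a, b, hab, heq⟩
      rw [Prod.mk.injEq] at heq
      obtain ⟨h1, h2⟩ := heq
      rw [Finset.singleton_inj] at h1 h2
      subst h1; subst h2
      exact hf hab
  · intro R _ hR
    by_cases hm : x ∈ R.1 ∧ y ∈ R.2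
    · rw [if_pos hm, if_neg]
      rintro ⟨a, b, hab, rfl⟩
      obtain ⟨h1, h2⟩ := hm
      simp only [Finset.mem_singleton] at h1 h2
      subst h1; subst h2
      exact hR rfl
    · rw [if_neg hm]
  · intro h; exact absurd (Finset.mem_univ _) h

end AuxBiased

/-- **Lemma 2.4 (large biased rectangle).** If `μ` is a product distribution and
`srec^{0,μ}_{ε,δ}(f) ≤ D`, then for every `ρ ∈ (0,1)` there is a rectangle `S` that is
`(1-ρ)`-biased towards `0` (i.e. `μ₁(S) ≤ ρ·μ₀(S)`) with
`μ(S) ≥ μ₀(S) ≥ (1/D)·((1-ε)·μ₀ - (δ/ρ)·μ₁)`. -/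
theorem exists_large_biased_rectangle {X Y : Type} [Fintype X] [Fintype Y]
    (f : X → Y → Bool) (μA : X → ℝ) (μB : Y → ℝ) (hA : IsDist μA) (hB : IsDist μB)
    (μ : X → Y → ℝ) (hμ : ∀ x y, μ x y = μA x * μB y)
    (ε δ D : ℝ) (hε : ε ∈ Set.Ioo (0 : ℝ) 1) (hδ : δ ∈ Set.Ioo (0 : ℝ) 1) (hD : 0 < D)
    (hsrec : srecZmu μ f false ε δ ≤ D) :
    ∀ ρ ∈ Set.Ioo (0 : ℝ) 1, ∃ S : Finset X × Finset Y,
      rMassZ μ f true S ≤ ρ * rMassZ μ f false S ∧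
      rMassZ μ f false S ≤ rMass μ S ∧
      (1 / D) * ((1 - ε) * totalZ μ f false - (δ / ρ) * totalZ μ f true) ≤
        rMassZ μ f false S := by
  intro ρ hρ
  obtain ⟨hρ0, hρ1⟩ := hρ
  obtain ⟨hε0, hε1⟩ := hε
  obtain ⟨hδ0, hδ1⟩ := hδ
  have hμnn : ∀ x y, 0 ≤ μ x y := fun x y => by
    rw [hμ]; exact mul_nonneg (hA.1 x) (hB.1 y)
  set B : ℝ := (1 - ε) * totalZ μ f false - (δ / ρ) * totalZ μ f true with hBdef
  by_cases hB : B ≤ 0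
  · -- trivial case: take the empty rectangle
    refine ⟨((∅ : Finset X), (∅ : Finset Y)), ?_, ?_, ?_⟩
    · rw [rMassZ_empty', rMassZ_empty']; simp
    · exact rMassZ_le_rMass' μ hμnn f false _
    · rw [rMassZ_empty']
      have : (1 / D) * B ≤ 0 :=
        mul_nonpos_of_nonneg_of_nonpos (by positivity) hB
      exact this
  push_neg at hB
  -- the LP feasible set
  set s : Set ℝ := { v : ℝ | ∃ w : Finset X × Finset Y → ℝ,
    (∀ R, 0 ≤ w R) ∧
    ((1 - ε) * totalZ μ f false ≤ ∑ x, ∑ y, if f x y = false then μ x y * rcov w x y else 0) ∧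
    (∀ x y, f x y ≠ false → rcov w x y ≤ δ) ∧
    (∀ x y, rcov w x y ≤ 1) ∧
    v = ∑ R : Finset X × Finset Y, w R } with hs
  have hsrec' : sInf s ≤ D := hsrec
  -- s is nonempty via the singleton cover
  have hne : s.Nonempty := by
    refine ⟨∑ R : Finset X × Finset Y, wSing f false R, wSing f false, ?_, ?_, ?_, ?_, rfl⟩
    · intro R; unfold wSing; split
      · exact zero_le_one
      · exact le_rfl
    · have : (∑ x, ∑ y, if f x y = false then μ x y * rcov (wSing f false) x y else 0)
          = totalZ μ f false := by
        unfold totalZ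
        apply Finset.sum_congr rfl; intro x _
        apply Finset.sum_congr rfl; intro y _
        rw [rcov_wSing]
        by_cases hf : f x y = false <;> simp [hf]
      rw [this]
      have ht := totalZ_nonneg' μ hμnn f false
      nlinarith
    · intro x y hf
      rw [rcov_wSing, if_neg hf]
      exact le_of_lt hδ0
    · intro x y
      rw [rcov_wSing]
      split
      · exact le_rfl
      · exact zero_le_one
  -- the finite family of biased rectangles
  set F : Finset (Finset X × Finset Y) :=
    Finset.univ.filter (fun S => rMassZ μ f true S ≤ ρ * rMassZ μ f false S) with hF
  have hFne : F.Nonempty := by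
    refine ⟨((∅ : Finset X), (∅ : Finset Y)), ?_⟩
    rw [hF, Finset.mem_filter]
    refine ⟨Finset.mem_univ _, ?_⟩
    rw [rMassZ_empty', rMassZ_empty']; simp
  set M : ℝ := F.sup' hFne (rMassZ μ f false) with hM
  -- key claim : ∀ η > 0, B ≤ (D + η) * M
  have key : ∀ η : ℝ, 0 < η → B ≤ (D + η) * M := by
    intro η hη
    obtain ⟨v, hv, hvlt⟩ := Real.lt_sInf_add_pos hne hη
    obtain ⟨w, hw0, hw1, hw2, hw3, hveq⟩ := hv
    have hvD : v < D + η := lt_of_lt_of_le hvlt (by linarith)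
    have hvnn : 0 ≤ v := by
      rw [hveq]
      exact Finset.sum_nonneg fun R _ => hw0 R
    -- weighted mass identities
    have hA0 : (1 - ε) * totalZ μ f false
        ≤ ∑ R : Finset X × Finset Y, w R * rMassZ μ f false R := by
      rw [sum_w_rMassZ]; exact hw1
    have hA1 : ∑ R : Finset X × Finset Y, w R * rMassZ μ f true R
        ≤ δ * totalZ μ f true := by
      rw [sum_w_rMassZ]
      unfold totalZ
      rw [Finset.mul_sum]
      apply Finset.sum_le_sum; intro x _
      rw [Finset.mul_sum]
      apply Finset.sum_le_sum; intro y _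
      by_cases hf : f x y = true
      · have hf' : f x y ≠ false := by simp [hf]
        rw [if_pos hf, if_pos hf]
        calc μ x y * rcov w x y ≤ μ x y * δ :=
              mul_le_mul_of_nonneg_left (hw2 x y hf') (hμnn x y)
          _ = δ * μ x y := mul_comm _ _
      · simp [hf]
    -- the weighted sum of g is at least B
    set g : Finset X × Finset Y → ℝ :=
      fun R => rMassZ μ f false R - (1 / ρ) * rMassZ μ f true R with hg
    have hsum : B ≤ ∑ R : Finset X × Finset Y, w R * g R := by
      have : ∑ R : Finset X × Finset Y, w R * g R
          = (∑ R : Finset X × Finset Y, w R * rMassZ μ f false R)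
            - (1 / ρ) * ∑ R : Finset X × Finset Y, w R * rMassZ μ f true R := by
        rw [Finset.mul_sum, ← Finset.sum_sub_distrib]
        apply Finset.sum_congr rfl; intro R _
        rw [hg]; ring
      rw [this, hBdef]
      have h1ρ : 0 ≤ 1 / ρ := by positivity
      have := mul_le_mul_of_nonneg_left hA1 h1ρ
      have hδρ : (1 / ρ) * (δ * totalZ μ f true) = (δ / ρ) * totalZ μ f true := by ring
      linarith [hA0]
    have hvpos : 0 < v := by
      rcases lt_or_eq_of_le hvnn with h | h
      · exact h
      · exfalso
        -- v = 0 forces all weights zero, contradicting B > 0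
        have hall : ∀ R : Finset X × Finset Y, w R = 0 := by
          intro R
          have := Finset.sum_eq_zero_iff_of_nonneg (fun R _ => hw0 R) |>.mp (by rw [← hveq, ← h])
          exact this R (Finset.mem_univ R)
        have : ∑ R : Finset X × Finset Y, w R * g R = 0 := by
          apply Finset.sum_eq_zero; intro R _; rw [hall R, zero_mul]
        rw [this] at hsum
        have hBle : B ≤ (δ / ρ) * totalZ μ f true - (δ / ρ) * totalZ μ f true := by linarith
        linarith
    -- there is a rectangle with g R ≥ B / v
    have hex : ∃ R : Finset X × Finset Y, B / v ≤ g R := by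
      by_contra hcon
      push_neg at hcon
      -- all w R = 0 impossible since v > 0
      have hexw : ∃ R : Finset X × Finset Y, 0 < w R := by
        by_contra hcw
        push_neg at hcw
        have : ∑ R : Finset X × Finset Y, w R = 0 := by
          apply Finset.sum_eq_zero; intro R _
          exact le_antisymm (hcw R) (hw0 R)
        rw [← hveq] at this
        linarith
      obtain ⟨R₀, hR₀⟩ := hexw
      have hlt : ∑ R : Finset X × Finset Y, w R * g R
          < ∑ R : Finset X × Finset Y, w R * (B / v) := by
        apply Finset.sum_lt_sum
        · intro R _
          exact mul_le_mul_of_nonneg_left (le_of_lt (hcon R)) (hw0 R)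
        · exact ⟨R₀, Finset.mem_univ _, mul_lt_mul_of_pos_left (hcon R₀) hR₀⟩
      have : ∑ R : Finset X × Finset Y, w R * (B / v) = B := by
        rw [← Finset.sum_mul, ← hveq]
        field_simp
      rw [this] at hlt
      linarith
    obtain ⟨R, hgR⟩ := hex
    have hBv : 0 < B / v := div_pos hB hvpos
    have hμ1R : 0 ≤ rMassZ μ f true R := rMassZ_nonneg' μ hμnn f true R
    have hgR' : rMassZ μ f false R - (1 / ρ) * rMassZ μ f true R = g R := rfl
    have hμ0R : B / v ≤ rMassZ μ f false R := by
      have : (1 / ρ) * rMassZ μ f true R ≥ 0 := by positivity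
      rw [hg] at hgR
      linarith
    have hRF : R ∈ F := by
      rw [hF, Finset.mem_filter]
      refine ⟨Finset.mem_univ _, ?_⟩
      rw [hg] at hgR
      have h1 : (1 / ρ) * rMassZ μ f true R ≤ rMassZ μ f false R - B / v := by linarith
      have h2 : rMassZ μ f true R ≤ ρ * (rMassZ μ f false R - B / v) := by
        have := mul_le_mul_of_nonneg_left h1 (le_of_lt hρ0)
        rw [← mul_assoc] at this
        rw [mul_one_div, div_self (ne_of_gt hρ0), one_mul] at this
        exact this
      have h3 : ρ * (rMassZ μ f false R - B / v) ≤ ρ * rMassZ μ f false R := by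
        have : 0 ≤ ρ * (B / v) := by positivity
        nlinarith
      linarith
    have hMR : rMassZ μ f false R ≤ M := Finset.le_sup' (rMassZ μ f false) hRF
    have hBDη : B / (D + η) ≤ B / v :=
      div_le_div_of_nonneg_left (le_of_lt hB) hvpos (le_of_lt hvD)
    have hDη : 0 < D + η := by linarith
    have : B / (D + η) ≤ M := le_trans hBDη (le_trans hμ0R hMR)
    calc B = (D + η) * (B / (D + η)) := by field_simp
      _ ≤ (D + η) * M := mul_le_mul_of_nonneg_left this (le_of_lt hDη)
  -- pass to the limit: B ≤ D * M
  have hM0 : 0 ≤ M := by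
    have hmem : ((∅ : Finset X), (∅ : Finset Y)) ∈ F := by
      rw [hF, Finset.mem_filter]
      exact ⟨Finset.mem_univ _, by rw [rMassZ_empty', rMassZ_empty']; simp⟩
    have := Finset.le_sup' (rMassZ μ f false) hmem
    rw [rMassZ_empty'] at this
    exact this
  have hBDM : B ≤ D * M := by
    refine le_of_forall_pos_le_add ?_
    intro e he
    have hM1 : (0:ℝ) < M + 1 := by linarith
    have hη : 0 < e / (M + 1) := by positivity
    have hk := key (e / (M + 1)) hη
    have h1 : (D + e / (M + 1)) * M = D * M + (e / (M + 1)) * M := by ring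
    have h2 : (e / (M + 1)) * M ≤ e := by
      rw [div_mul_eq_mul_div, div_le_iff₀ hM1]
      nlinarith
    have hk' : B ≤ D * M + e / (M + 1) * M := by rw [← h1]; exact hk
    exact le_trans hk' (add_le_add_right h2 (D * M))
  -- extract the maximizing rectangle
  obtain ⟨S, hSF, hSval⟩ := Finset.exists_mem_eq_sup' hFne (rMassZ μ f false)
  rw [hF, Finset.mem_filter] at hSF
  refine ⟨S, hSF.2, rMassZ_le_rMass' μ hμnn f false S, ?_⟩
  have hMS : M = rMassZ μ f false S := hSval
  rw [← hMS]
  calc (1 / D) * B ≤ (1 / D) * (D * M) :=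
        mul_le_mul_of_nonneg_left hBDM (by positivity)
    _ = M := by field_simp
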